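/- Let E be a finite-dimensional real inner product space and let f : E → ℝ be lower semicontinuous with a nonempty set of global minimizers. Let (p_k), (g_k) be sequences in E, and (ε_k), (t_k) real sequences with ε_k ≥ 0 and t_k ∈ [0, 1], satisfying: (i) for every k and every q ∈ E, f(q) ≥ f(p_k) + ⟨g_k, q − p_k⟩ − ε_k; (ii) p_{k+1} = p_k − t_k g_k for every k; (iii) Σ_{k=0}^∞ t_k (‖g_k‖² + ε_k) < ∞; and (iv) there is a subsequence (k_n) with g_{k_n} → 0 and ε_{k_n} → 0. Then the sequence (p_k) converges to a global minimizer of f. -/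

import Mathlib

open RealInnerProductSpace Filter

/-- Flat-case content of Theorem 5.8: convergence of the convex bundle method
to a global minimizer. -/
theorem bundle_method_converges_to_minimizer
    {E : Type*} [NormedAddCommGroup E] [InnerProductSpace ℝ E]
    [FiniteDimensional ℝ E]
    (f : E → ℝ) (hlsc : LowerSemicontinuous f)
    (hmin_nonempty : ∃ q, ∀ q', f q ≤ f q')
    (p g : ℕ → E) (ε t : ℕ → ℝ)
    (hε : ∀ k, 0 ≤ ε k) (ht : ∀ k, t k ∈ Set.Icc (0 : ℝ) 1)
    (hsub : ∀ k, ∀ q, f q ≥ f (p k) + ⟪g k, q - p k⟫ - ε k)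
    (hstep : ∀ k, p (k + 1) = p k - t k • g k)
    (hsum : Summable (fun k => t k * (‖g k‖ ^ 2 + ε k)))
    (φ : ℕ → ℕ) (hφ : StrictMono φ)
    (hgφ : Tendsto (fun n => g (φ n)) atTop (nhds 0))
    (hεφ : Tendsto (fun n => ε (φ n)) atTop (nhds 0)) :
    ∃ pStar, Tendsto p atTop (nhds pStar) ∧ ∀ q, f pStar ≤ f q := by
  classical
  obtain ⟨q₀, hq₀⟩ := hmin_nonempty
  set s : ℕ → ℝ := fun k => 2 * (t k * (‖g k‖ ^ 2 + ε k)) with hs_def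
  have hs_nonneg : ∀ k, 0 ≤ s k := by
    intro k
    have h1 := (ht k).1
    have h2 : (0:ℝ) ≤ ‖g k‖ ^ 2 + ε k := add_nonneg (by positivity) (hε k)
    simp only [hs_def]
    positivity
  have hs_sum : Summable s := hsum.mul_left 2
  -- key one-step inequality, valid for any global minimizer q
  have key : ∀ q, (∀ q', f q ≤ f q') → ∀ k,
      ‖p (k+1) - q‖ ^ 2 ≤ ‖p k - q‖ ^ 2 + s k := by
    intro q hq k
    have hexp : p (k+1) - q = (p k - q) - t k • g k := by
      rw [hstep k, sub_right_comm]
    have hnorm : ‖p (k+1) - q‖ ^ 2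
        = ‖p k - q‖ ^ 2 - 2 * ⟪p k - q, t k • g k⟫ + ‖t k • g k‖ ^ 2 := by
      rw [hexp, norm_sub_sq_real]
    have hinner : ⟪p k - q, t k • g k⟫ = t k * ⟪g k, p k - q⟫ := by
      rw [real_inner_smul_right, real_inner_comm]
    have hns : ‖t k • g k‖ ^ 2 = t k ^ 2 * ‖g k‖ ^ 2 := by
      rw [norm_smul, mul_pow, Real.norm_eq_abs, sq_abs]
    have hI : ⟪g k, p k - q⟫ ≥ -ε k := by
      have h := hsub k q
      have hiq : ⟪g k, q - p k⟫ = -⟪g k, p k - q⟫ := by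
        rw [← inner_neg_right, neg_sub]
      have hfq : f q ≤ f (p k) := hq (p k)
      rw [hiq] at h
      linarith
    have ht0 := (ht k).1
    have ht1 := (ht k).2
    have hG : (0:ℝ) ≤ ‖g k‖ ^ 2 := by positivity
    have hεk := hε k
    rw [hnorm, hinner, hns]
    simp only [hs_def]
    nlinarith [mul_nonneg ht0 hG, mul_nonneg (mul_nonneg ht0 (sub_nonneg.2 ht1)) hG,
      mul_nonneg ht0 (neg_le_iff_add_nonneg.1 hI)]
  -- chained inequality
  have chain : ∀ q, (∀ q', f q ≤ f q') → ∀ m k, m ≤ k →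
      ‖p k - q‖ ^ 2 ≤ ‖p m - q‖ ^ 2 + ∑ j ∈ Finset.Ico m k, s j := by
    intro q hq m k hmk
    induction k, hmk using Nat.le_induction with
    | base => simp
    | succ k hmk ih =>
      have h1 := key q hq k
      have h2 : ∑ j ∈ Finset.Ico m (k+1), s j = (∑ j ∈ Finset.Ico m k, s j) + s k := by
        rw [Finset.sum_Ico_succ_top hmk]
      rw [h2]
      linarith
  -- boundedness of the sequence p
  set C : ℝ := ‖p 0 - q₀‖ ^ 2 + ∑' j, s j with hC_def
  have hbound : ∀ k, ‖p k - q₀‖ ^ 2 ≤ C := by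
    intro k
    have h1 := chain q₀ hq₀ 0 k (Nat.zero_le k)
    have h2 : ∑ j ∈ Finset.Ico 0 k, s j ≤ ∑' j, s j := by
      exact Summable.sum_le_tsum _ (fun i _ => hs_nonneg i) hs_sum
    calc ‖p k - q₀‖ ^ 2 ≤ ‖p 0 - q₀‖ ^ 2 + ∑ j ∈ Finset.Ico 0 k, s j := h1
      _ ≤ C := by rw [hC_def]; linarith
  have hball : ∀ n, p (φ n) ∈ Metric.closedBall q₀ (Real.sqrt C) := by
    intro n
    rw [Metric.mem_closedBall, dist_eq_norm]
    calc ‖p (φ n) - q₀‖ = Real.sqrt (‖p (φ n) - q₀‖ ^ 2) := by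
          rw [Real.sqrt_sq (norm_nonneg _)]
      _ ≤ Real.sqrt C := Real.sqrt_le_sqrt (hbound _)
  obtain ⟨pStar, -, ψ, hψ, hpp⟩ :=
    tendsto_subseq_of_bounded Metric.isBounded_closedBall hball
  -- pStar is a global minimizer
  have hmin : ∀ q, f pStar ≤ f q := by
    intro q
    by_contra hcon
    push_neg at hcon
    obtain ⟨y, hy1, hy2⟩ := exists_between hcon
    have hlow : ∀ᶠ n in atTop, y < f (p (φ (ψ n))) :=
      (hpp.eventually (hlsc pStar y hy2))
    have hgc : Tendsto (fun n => g (φ (ψ n))) atTop (nhds 0) :=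
      hgφ.comp hψ.tendsto_atTop
    have hεc : Tendsto (fun n => ε (φ (ψ n))) atTop (nhds 0) :=
      hεφ.comp hψ.tendsto_atTop
    have hc : Tendsto (fun n => f q + (-⟪g (φ (ψ n)), q - p (φ (ψ n))⟫ + ε (φ (ψ n))))
        atTop (nhds (f q)) := by
      have hinner : Tendsto (fun n => ⟪g (φ (ψ n)), q - p (φ (ψ n))⟫)
          atTop (nhds (⟪(0:E), q - pStar⟫)) :=
        Tendsto.inner hgc (tendsto_const_nhds.sub hpp)
      rw [inner_zero_left] at hinner
      have := (hinner.neg.add hεc)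
      simpa using tendsto_const_nhds.add this
    have hle : ∀ᶠ n in atTop,
        y ≤ f q + (-⟪g (φ (ψ n)), q - p (φ (ψ n))⟫ + ε (φ (ψ n))) := by
      filter_upwards [hlow] with n hn
      have h := hsub (φ (ψ n)) q
      linarith
    have : y ≤ f q := ge_of_tendsto hc hle
    linarith
  -- distance squared to pStar
  set a : ℕ → ℝ := fun k => ‖p k - pStar‖ ^ 2 with ha_def
  have ha_nonneg : ∀ k, 0 ≤ a k := fun k => by positivity
  have ha_sub : Tendsto (fun n => a (φ (ψ n))) atTop (nhds 0) := by
    have := ((hpp.sub (tendsto_const_nhds (x := pStar))).norm.pow 2)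
    simpa using this
  -- partial sums of s are Cauchy
  set S : ℕ → ℝ := fun n => ∑ j ∈ Finset.range n, s j with hS_def
  have hScauchy : CauchySeq S := (hs_sum.hasSum.tendsto_sum_nat).cauchySeq
  have ha_tendsto : Tendsto a atTop (nhds 0) := by
    rw [Metric.tendsto_atTop]
    intro δ hδ
    obtain ⟨N, hN⟩ := Metric.cauchySeq_iff.1 hScauchy (δ/2) (by linarith)
    have h1 : ∀ᶠ n in atTop, a (φ (ψ n)) < δ/2 := by
      have := Metric.tendsto_atTop.1 ha_sub (δ/2) (by linarith)
      obtain ⟨M, hM⟩ := this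
      filter_upwards [eventually_ge_atTop M] with n hn
      have := hM n hn
      rwa [Real.dist_eq, abs_of_nonneg (by linarith [ha_nonneg (φ (ψ n))] : (0:ℝ) ≤ a (φ (ψ n)) - 0), sub_zero] at this
    have h2 : ∀ᶠ n in atTop, N ≤ φ (ψ n) := by
      filter_upwards [eventually_ge_atTop N] with n hn
      exact le_trans hn ((hφ.comp hψ).id_le n)
    obtain ⟨n, hn1, hn2⟩ := (h1.and h2).exists
    refine ⟨φ (ψ n), fun k hk => ?_⟩
    have hchain := chain pStar hmin (φ (ψ n)) k hk
    have hsum_bound : ∑ j ∈ Finset.Ico (φ (ψ n)) k, s j < δ/2 := by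
      have hd := hN k (le_trans hn2 hk) (φ (ψ n)) hn2
      rw [Real.dist_eq] at hd
      have heq : ∑ j ∈ Finset.Ico (φ (ψ n)) k, s j = S k - S (φ (ψ n)) := by
        rw [hS_def]
        exact Finset.sum_Ico_eq_sub _ hk
      calc ∑ j ∈ Finset.Ico (φ (ψ n)) k, s j = S k - S (φ (ψ n)) := heq
        _ ≤ |S k - S (φ (ψ n))| := le_abs_self _
        _ < δ/2 := hd
    rw [Real.dist_eq, sub_zero, abs_of_nonneg (ha_nonneg k)]
    calc a k ≤ a (φ (ψ n)) + ∑ j ∈ Finset.Ico (φ (ψ n)) k, s j := hchain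
      _ < δ/2 + δ/2 := by linarith
      _ = δ := by ring
  -- conclude convergence of p
  refine ⟨pStar, ?_, hmin⟩
  rw [tendsto_iff_norm_sub_tendsto_zero]
  have hsqrt : Tendsto (fun k => Real.sqrt (a k)) atTop (nhds 0) := by
    have := (Real.continuous_sqrt.tendsto 0).comp ha_tendsto
    simpa [Function.comp_def] using this
  have heq : (fun k => ‖p k - pStar‖) = fun k => Real.sqrt (a k) := by
    funext k
    rw [ha_def, Real.sqrt_sq (norm_nonneg _)]
  rw [heq]
  exact hsqrt
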